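/- The number of partitions p(r) of a positive integer r satisfies p(r) ≤ exp(π √(2r/3)) for all r ≥ 1. -/

import Mathlib

open Finset Real

lemma part_count_sum (n : ℕ) (p : Nat.Partition n) :
    ∑ k ∈ Finset.range n, (k + 1) * p.parts.count (k + 1) = n := by
  classical
  have hmem_le : ∀ a ∈ p.parts, a ≤ n := fun a ha => by
    have := Multiset.single_le_sum (fun x _ => Nat.zero_le x) a ha
    rwa [p.parts_sum] at this
  have h0 : p.parts.sum = ∑ m ∈ p.parts.toFinset, p.parts.count m • m :=
    Finset.sum_multiset_count p.parts
  have hsub : p.parts.toFinset ⊆ Finset.Icc 1 n := by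
    intro a ha
    rw [Multiset.mem_toFinset] at ha
    exact Finset.mem_Icc.2 ⟨p.parts_pos ha, hmem_le a ha⟩
  have h1 : ∑ m ∈ Finset.Icc 1 n, p.parts.count m • m = p.parts.sum := by
    rw [h0]
    exact (Finset.sum_subset hsub (fun a _ ha => by
      rw [Multiset.count_eq_zero_of_notMem (by simpa [Multiset.mem_toFinset] using ha),
        zero_smul])).symm
  have himg : Finset.Icc 1 n = (Finset.range n).image (· + 1) := by
    ext a
    simp only [Finset.mem_Icc, Finset.mem_image, Finset.mem_range]
    constructor
    · rintro ⟨h1, h2⟩; exact ⟨a - 1, by omega, by omega⟩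
    · rintro ⟨b, hb, rfl⟩; omega
  rw [himg, Finset.sum_image (by intro a _ b _ h; simp only at h; omega)] at h1
  rw [p.parts_sum] at h1
  calc ∑ k ∈ Finset.range n, (k + 1) * p.parts.count (k + 1)
      = ∑ k ∈ Finset.range n, p.parts.count (k + 1) • (k + 1) := by
        refine Finset.sum_congr rfl fun k _ => ?_
        rw [smul_eq_mul, mul_comm]
    _ = n := h1

lemma part_card_le (n : ℕ) {x : ℝ} (hx0 : 0 < x) (hx1 : x < 1) :
    (Fintype.card (Nat.Partition n) : ℝ) * x ^ n ≤
      ∏ k ∈ Finset.range n, (1 - x ^ (k + 1))⁻¹ := by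
  classical
  have hmem_le : ∀ (p : Nat.Partition n), ∀ a ∈ p.parts, a ≤ n := fun p a ha => by
    have := Multiset.single_le_sum (fun x _ => Nat.zero_le x) a ha
    rwa [p.parts_sum] at this
  have hcount : ∀ (p : Nat.Partition n) (k : ℕ), p.parts.count (k + 1) < n + 1 := by
    intro p k
    have h1 : p.parts.count (k + 1) ≤ Multiset.card p.parts := Multiset.count_le_card _ _
    have h2 : Multiset.card p.parts • 1 ≤ p.parts.sum :=
      Multiset.card_nsmul_le_sum (fun x hx => p.parts_pos hx)
    rw [smul_eq_mul, mul_one, p.parts_sum] at h2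
    omega
  set Φ : Nat.Partition n → (Fin n → Fin (n + 1)) :=
    fun p k => ⟨p.parts.count ((k : ℕ) + 1), hcount p k⟩ with hΦ
  set f : (Fin n → Fin (n + 1)) → ℝ :=
    fun g => ∏ k : Fin n, x ^ (((k : ℕ) + 1) * (g k : ℕ)) with hf
  have hinj : Function.Injective Φ := by
    intro p q h
    have hc : ∀ k : Fin n, p.parts.count ((k : ℕ) + 1) = q.parts.count ((k : ℕ) + 1) := by
      intro k
      have := congrFun h k
      simpa [hΦ, Fin.mk.injEq] using this
    have : p.parts = q.parts := by
      ext a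
      rcases Nat.eq_zero_or_pos a with rfl | ha
      · rw [Multiset.count_eq_zero_of_notMem (fun hm => lt_irrefl 0 (p.parts_pos hm)),
          Multiset.count_eq_zero_of_notMem (fun hm => lt_irrefl 0 (q.parts_pos hm))]
      · by_cases han : a ≤ n
        · have hlt : a - 1 < n := by omega
          have := hc ⟨a - 1, hlt⟩
          simpa [Nat.sub_add_cancel ha] using this
        · rw [Multiset.count_eq_zero_of_notMem (fun hm => han (hmem_le p a hm)),
            Multiset.count_eq_zero_of_notMem (fun hm => han (hmem_le q a hm))]
    cases p; cases q; simpa using this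
  have hval : ∀ p : Nat.Partition n, f (Φ p) = x ^ n := by
    intro p
    rw [hf]
    simp only [hΦ]
    rw [Finset.prod_pow_eq_pow_sum]
    congr 1
    rw [Fin.sum_univ_eq_sum_range (fun k => (k + 1) * p.parts.count (k + 1)) n]
    exact part_count_sum n p
  have step1 : (Fintype.card (Nat.Partition n) : ℝ) * x ^ n = ∑ p : Nat.Partition n, f (Φ p) := by
    rw [Finset.sum_congr rfl (fun p _ => hval p), Finset.sum_const, Finset.card_univ,
      nsmul_eq_mul]
  have step2 : ∑ p : Nat.Partition n, f (Φ p) = ∑ g ∈ Finset.univ.image Φ, f g :=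
    (Finset.sum_image (fun p _ q _ h => hinj h)).symm
  have step3 : ∑ g ∈ Finset.univ.image Φ, f g ≤ ∑ g : Fin n → Fin (n + 1), f g :=
    Finset.sum_le_sum_of_subset_of_nonneg (Finset.subset_univ _)
      (fun g _ _ => Finset.prod_nonneg fun _ _ => pow_nonneg hx0.le _)
  have step4 : ∑ g : Fin n → Fin (n + 1), f g =
      ∏ k : Fin n, ∑ j : Fin (n + 1), x ^ (((k : ℕ) + 1) * (j : ℕ)) := by
    simp only [hf]
    exact (Fintype.prod_sum (fun (k : Fin n) (j : Fin (n + 1)) => x ^ (((k : ℕ) + 1) * (j : ℕ)))).symm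
  have step5 : ∏ k : Fin n, ∑ j : Fin (n + 1), x ^ (((k : ℕ) + 1) * (j : ℕ)) ≤
      ∏ k ∈ Finset.range n, (1 - x ^ (k + 1))⁻¹ := by
    rw [Fin.prod_univ_eq_prod_range (fun k => ∑ j : Fin (n + 1), x ^ ((k + 1) * (j : ℕ))) n]
    apply Finset.prod_le_prod
    · intro k _
      exact Finset.sum_nonneg fun j _ => pow_nonneg hx0.le _
    · intro k _
      have hy0 : (0:ℝ) ≤ x ^ (k + 1) := pow_nonneg hx0.le _
      have hy1 : x ^ (k + 1) < 1 := pow_lt_one₀ hx0.le hx1 (Nat.succ_ne_zero k)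
      calc ∑ j : Fin (n + 1), x ^ ((k + 1) * (j : ℕ))
          = ∑ j ∈ Finset.range (n + 1), (x ^ (k + 1)) ^ j := by
            rw [Fin.sum_univ_eq_sum_range (fun j => x ^ ((k + 1) * j)) (n + 1)]
            exact Finset.sum_congr rfl fun j _ => by rw [pow_mul]
        _ ≤ (1 - x ^ (k + 1))⁻¹ :=
            sum_le_hasSum _ (fun j _ => pow_nonneg hy0 _)
              (hasSum_geometric_of_lt_one hy0 hy1)
  calc (Fintype.card (Nat.Partition n) : ℝ) * x ^ n
      = ∑ g ∈ Finset.univ.image Φ, f g := step1.trans step2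
    _ ≤ ∑ g : Fin n → Fin (n + 1), f g := step3
    _ = _ := step4
    _ ≤ _ := step5

lemma geom_sum_succ_le {y : ℝ} (hy0 : 0 ≤ y) (hy1 : y < 1) (n : ℕ) :
    ∑ k ∈ Finset.range n, y ^ (k + 1) ≤ y / (1 - y) := by
  have h : ∑ k ∈ Finset.range n, y ^ (k + 1) = y * ∑ k ∈ Finset.range n, y ^ k := by
    rw [Finset.mul_sum]
    exact Finset.sum_congr rfl fun k _ => by ring
  rw [h, div_eq_mul_inv]
  apply mul_le_mul_of_nonneg_left _ hy0
  exact sum_le_hasSum _ (fun j _ => pow_nonneg hy0 _) (hasSum_geometric_of_lt_one hy0 hy1)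

lemma one_sub_pow_ge {x : ℝ} (hx0 : 0 ≤ x) (hx1 : x ≤ 1) (j : ℕ) :
    ((j : ℝ) + 1) * x ^ j * (1 - x) ≤ 1 - x ^ (j + 1) := by
  have hgs : (1 - x) * ∑ i ∈ Finset.range (j + 1), x ^ i = 1 - x ^ (j + 1) := by
    have := geom_sum_mul x (j + 1)
    nlinarith [this]
  rw [← hgs]
  have hsum : ((j : ℝ) + 1) * x ^ j ≤ ∑ i ∈ Finset.range (j + 1), x ^ i := by
    calc ((j : ℝ) + 1) * x ^ j = ∑ _i ∈ Finset.range (j + 1), x ^ j := by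
          rw [Finset.sum_const, Finset.card_range, nsmul_eq_mul]; push_cast; ring
      _ ≤ ∑ i ∈ Finset.range (j + 1), x ^ i :=
          Finset.sum_le_sum fun i hi =>
            pow_le_pow_of_le_one hx0 hx1 (Finset.mem_range_succ_iff.mp hi)
  nlinarith [pow_nonneg hx0 j]

lemma prod_inv_le_exp (n : ℕ) {x : ℝ} (hx0 : 0 < x) (hx1 : x < 1) :
    ∏ k ∈ Finset.range n, (1 - x ^ (k + 1))⁻¹ ≤
      Real.exp (Real.pi ^ 2 / 6 * (x / (1 - x))) := by
  have hxk1 : ∀ k : ℕ, x ^ (k + 1) < 1 := fun k => pow_lt_one₀ hx0.le hx1 (Nat.succ_ne_zero k)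
  have hpos : ∀ k : ℕ, (0:ℝ) < 1 - x ^ (k + 1) := fun k => sub_pos.2 (hxk1 k)
  -- the series for each log
  set a : ℕ → ℕ → ℝ := fun k j => x ^ ((k + 1) * (j + 1)) / ((j : ℝ) + 1) with ha
  have hhs : ∀ k : ℕ, HasSum (a k) (-Real.log (1 - x ^ (k + 1))) := by
    intro k
    have h := Real.hasSum_pow_div_log_of_abs_lt_one
      (x := x ^ (k + 1)) (by rw [abs_of_nonneg (pow_nonneg hx0.le _)]; exact hxk1 k)
    convert h using 1
    funext j
    rw [ha]
    simp only
    rw [← pow_mul]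
  -- key sum bound
  have key : ∑ k ∈ Finset.range n, (-Real.log (1 - x ^ (k + 1))) ≤
      Real.pi ^ 2 / 6 * (x / (1 - x)) := by
    have hswap : ∑ k ∈ Finset.range n, (-Real.log (1 - x ^ (k + 1))) =
        ∑' j : ℕ, ∑ k ∈ Finset.range n, a k j := by
      rw [Summable.tsum_finsetSum (fun k _ => (hhs k).summable)]
      exact Finset.sum_congr rfl fun k _ => ((hhs k).tsum_eq).symm
    rw [hswap]
    -- target series
    have hz : HasSum (fun j : ℕ => (1 : ℝ) / ((j : ℝ) + 1) ^ 2) (Real.pi ^ 2 / 6) := by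
      have h0 : HasSum (fun n : ℕ => (1 : ℝ) / (n : ℝ) ^ 2)
          (Real.pi ^ 2 / 6 + ∑ i ∈ Finset.range 1, (1 : ℝ) / (i : ℝ) ^ 2) := by
        simpa using hasSum_zeta_two
      have h1 := (hasSum_nat_add_iff (f := fun n : ℕ => (1 : ℝ) / (n : ℝ) ^ 2) 1).mpr h0
      convert h1 using 2 with j
      · rfl
      push_cast
      ring
    have hz' : HasSum (fun j : ℕ => x / (1 - x) * ((1 : ℝ) / ((j : ℝ) + 1) ^ 2))
        (x / (1 - x) * (Real.pi ^ 2 / 6)) := hz.mul_left _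
    have hterm : ∀ j : ℕ, ∑ k ∈ Finset.range n, a k j ≤
        x / (1 - x) * ((1 : ℝ) / ((j : ℝ) + 1) ^ 2) := by
      intro j
      set J : ℝ := (j : ℝ) + 1 with hJ
      have hJ0 : (0:ℝ) < J := by positivity
      have hxj1 : x ^ (j + 1) < 1 := hxk1 j
      have hxj0 : (0:ℝ) < x ^ (j + 1) := pow_pos hx0 _
      have h1x : (0:ℝ) < 1 - x := sub_pos.2 hx1
      have hgeo : ∑ k ∈ Finset.range n, x ^ ((k + 1) * (j + 1)) ≤
          x ^ (j + 1) / (1 - x ^ (j + 1)) := by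
        have := geom_sum_succ_le (pow_nonneg hx0.le (j + 1)) hxj1 n
        calc ∑ k ∈ Finset.range n, x ^ ((k + 1) * (j + 1))
            = ∑ k ∈ Finset.range n, (x ^ (j + 1)) ^ (k + 1) := by
              refine Finset.sum_congr rfl fun k _ => ?_
              rw [← pow_mul, mul_comm]
          _ ≤ _ := this
      have hden : J * x ^ j * (1 - x) ≤ 1 - x ^ (j + 1) :=
        one_sub_pow_ge hx0.le hx1.le j
      have hxj : (0:ℝ) < x ^ j := pow_pos hx0 _
      have hquot : x ^ (j + 1) / (1 - x ^ (j + 1)) ≤ x / (J * (1 - x)) := by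
        rw [div_le_div_iff₀ (hpos j) (by positivity)]
        have : x ^ (j + 1) = x * x ^ j := by ring
        nlinarith [mul_pos hJ0 hxj, mul_pos hxj0 (mul_pos hJ0 h1x)]
      have hsum : ∑ k ∈ Finset.range n, a k j =
          (∑ k ∈ Finset.range n, x ^ ((k + 1) * (j + 1))) / J := by
        rw [Finset.sum_div]
      rw [hsum]
      calc (∑ k ∈ Finset.range n, x ^ ((k + 1) * (j + 1))) / J
          ≤ (x / (J * (1 - x))) / J := by
            gcongr
            exact hgeo.trans hquot
        _ = x / (1 - x) * ((1 : ℝ) / J ^ 2) := by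
            rw [div_div, div_mul_div_comm, mul_one]
            congr 1
            ring
    calc ∑' j : ℕ, ∑ k ∈ Finset.range n, a k j
        ≤ ∑' j : ℕ, x / (1 - x) * ((1 : ℝ) / ((j : ℝ) + 1) ^ 2) :=
          Summable.tsum_le_tsum hterm (summable_sum fun k _ => (hhs k).summable) hz'.summable
      _ = x / (1 - x) * (Real.pi ^ 2 / 6) := hz'.tsum_eq
      _ = Real.pi ^ 2 / 6 * (x / (1 - x)) := by ring
  -- convert product to exp of sum
  have hprod : ∏ k ∈ Finset.range n, (1 - x ^ (k + 1))⁻¹ =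
      Real.exp (∑ k ∈ Finset.range n, (-Real.log (1 - x ^ (k + 1)))) := by
    rw [Real.exp_sum]
    refine Finset.prod_congr rfl fun k _ => ?_
    rw [Real.exp_neg, Real.exp_log (hpos k)]
  rw [hprod]
  exact Real.exp_le_exp.2 key

theorem stmt14 (r : ℕ) (hr : 1 ≤ r) :
    (Fintype.card (Nat.Partition r) : ℝ) ≤
      Real.exp (Real.pi * Real.sqrt (2 * r / 3)) := by
  have hr0 : (0:ℝ) < r := by exact_mod_cast hr
  set s : ℝ := Real.sqrt (6 * r) with hs
  have hs0 : 0 < s := Real.sqrt_pos.2 (by positivity)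
  have hs2 : s ^ 2 = 6 * r := Real.sq_sqrt (by positivity)
  set t : ℝ := Real.pi / s with ht
  have ht0 : 0 < t := div_pos Real.pi_pos hs0
  set x : ℝ := 1 / (1 + t) with hx
  have h1t : (0:ℝ) < 1 + t := by linarith
  have hx0 : 0 < x := by rw [hx]; positivity
  have hx1 : x < 1 := by rw [hx, div_lt_one h1t]; linarith
  have h1 := part_card_le r hx0 hx1
  have h2 := prod_inv_le_exp r hx0 hx1
  have hxr : 0 < x ^ r := pow_pos hx0 r
  have hfrac : x / (1 - x) = 1 / t := by
    have h1 : 1 - x = t / (1 + t) := by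
      rw [hx]; field_simp; ring
    rw [h1, hx, div_div_div_cancel_right₀]
    exact h1t.ne'
  have hxinv : x⁻¹ = 1 + t := by
    rw [hx, one_div, inv_inv]
  have hB := h1.trans h2
  rw [hfrac] at hB
  have step : (Fintype.card (Nat.Partition r) : ℝ) ≤
      Real.exp (Real.pi ^ 2 / 6 * (1 / t)) * (1 + t) ^ r := by
    calc (Fintype.card (Nat.Partition r) : ℝ)
        = (Fintype.card (Nat.Partition r) : ℝ) * x ^ r * (x ^ r)⁻¹ := by
          field_simp
      _ ≤ Real.exp (Real.pi ^ 2 / 6 * (1 / t)) * (x ^ r)⁻¹ :=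
          mul_le_mul_of_nonneg_right hB (by positivity)
      _ = Real.exp (Real.pi ^ 2 / 6 * (1 / t)) * (1 + t) ^ r := by
          rw [← inv_pow, hxinv]
  have hpow : (1 + t) ^ r ≤ Real.exp ((r : ℝ) * t) := by
    have hlog : (1 + t) ≤ Real.exp t := by
      have := Real.add_one_le_exp t; linarith
    calc (1 + t) ^ r ≤ (Real.exp t) ^ r := pow_le_pow_left₀ h1t.le hlog r
      _ = Real.exp ((r : ℝ) * t) := by
        rw [← Real.exp_nat_mul]
  have hexp : Real.pi ^ 2 / 6 * (1 / t) + (r : ℝ) * t = Real.pi * (s / 3) := by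
    rw [ht]
    field_simp
    nlinarith [hs2, Real.pi_pos]
  have hsqrt : Real.sqrt (2 * (r : ℝ) / 3) = s / 3 := by
    have h : (2 * (r : ℝ) / 3) = (s / 3) ^ 2 := by
      rw [div_pow, hs2]; ring
    rw [h, Real.sqrt_sq (by positivity)]
  calc (Fintype.card (Nat.Partition r) : ℝ)
      ≤ Real.exp (Real.pi ^ 2 / 6 * (1 / t)) * (1 + t) ^ r := step
    _ ≤ Real.exp (Real.pi ^ 2 / 6 * (1 / t)) * Real.exp ((r : ℝ) * t) :=
        mul_le_mul_of_nonneg_left hpow (Real.exp_nonneg _)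
    _ = Real.exp (Real.pi ^ 2 / 6 * (1 / t) + (r : ℝ) * t) := (Real.exp_add _ _).symm
    _ = Real.exp (Real.pi * (s / 3)) := by rw [hexp]
    _ = Real.exp (Real.pi * Real.sqrt (2 * r / 3)) := by rw [← hsqrt]
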